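/- Let (X,d,μ) be a proper α-Ahlfors regular metric measure space and let Q ⊆ X be a countable WDS subset with radius function R : Q → (0,∞) and constant C ≥ 1. Then for every nonempty bounded open set U ⊆ X there exist a constant C_U ≥ 1 and k_U ∈ ℕ such that for every integer k ≥ k_U there is a finite subset Q_U(k) ⊆ Q satisfying: 1/(C·k) ≤ R(ξ) ≤ C/k for all ξ ∈ Q_U(k); ⋃_{ξ∈Q_U(k)} B(ξ,R(ξ)) ⊆ U; and #Q_U(k) ≥ (1/C_U)·k^α·μ(U). -/

import Mathlib

open Metric Filter Set MeasureTheory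
open scoped ENNReal NNReal Topology

noncomputable section

variable {X : Type*}

/-- `μ` is `α`-Ahlfors regular with constant `C`:
for every `0 < r ≤ diam X`, `r^α/C ≤ μ(B(ξ,r)) ≤ C·r^α`. -/
def IsAhlforsRegularWith [MetricSpace X] [MeasurableSpace X] (μ : Measure X)
    (α C : ℝ) : Prop :=
  ∀ (ξ : X) (r : ℝ), 0 < r → ENNReal.ofReal r ≤ EMetric.diam (univ : Set X) →
    ENNReal.ofReal (r ^ α / C) ≤ μ (ball ξ r) ∧
      μ (ball ξ r) ≤ ENNReal.ofReal (C * r ^ α)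

/-- `μ` is `(α,β)`-regular with constant `C`: Ahlfors regularity together with the
annular lower bound `μ(closedBall(ξ,R) \ B(ξ,r)) ≥ (1/C)·r^α·((R−r)/r)^β`. -/
def IsRegularMeasure [MetricSpace X] [MeasurableSpace X] (μ : Measure X)
    (α β C : ℝ) : Prop :=
  IsAhlforsRegularWith μ α C ∧
    ∀ (ξ : X) (r R : ℝ), 0 < r → r ≤ R →
      ENNReal.ofReal R ≤ EMetric.diam (univ : Set X) →
      ENNReal.ofReal (1 / C * r ^ α * ((R - r) / r) ^ β) ≤
        μ (closedBall ξ R \ ball ξ r)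

/-- `(Q, R)` is a WDS (well-separated and well-distributed) subset with constant `C`. -/
def IsWDS [MetricSpace X] [MeasurableSpace X] (μ : Measure X) (α : ℝ)
    (Q : Set X) (R : X → ℝ) (C : ℝ) : Prop :=
  1 ≤ C ∧
    (∀ ξ ∈ Q, ∀ ζ ∈ Q, ξ ≠ ζ → 1 / C * min (R ξ) (R ζ) ≤ dist ξ ζ) ∧
    ∀ (η : X) (r : ℝ), 0 < r → ∃ kB : ℕ, ∀ k : ℕ, kB ≤ k → ∃ F : Finset X,
      ↑F ⊆ Q ∧ (∀ ξ ∈ F, 1 / (C * k) ≤ R ξ ∧ R ξ ≤ C / k) ∧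
      (∀ ξ ∈ F, ball ξ (R ξ) ⊆ ball η r) ∧
      ENNReal.ofReal ((k : ℝ) ^ α / C) * μ (ball η r) ≤ (F.card : ℝ≥0∞)

/-- The set of points `ψ`-well-approximable by `(Q,R)`. -/
def WSet [MetricSpace X] (Q : Set X) (R : X → ℝ) (ψ : ℝ → ℝ) : Set X :=
  {x | {ξ | ξ ∈ Q ∧ dist x ξ < ψ (R ξ)}.Infinite}

/-- The set of points exactly `ψ`-approximable by `(Q,R)`. -/
def ESet [MetricSpace X] (Q : Set X) (R : X → ℝ) (ψ : ℝ → ℝ) : Set X :=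
  WSet Q R ψ \ ⋃ c ∈ Ioo (0 : ℝ) 1, WSet Q R fun x => c * ψ x

/-- The lower order at zero of `ψ`, `liminf_{x→0+} log ψ(x) / log x`,
as an extended nonnegative real. -/
def lowerOrderAtZero (ψ : ℝ → ℝ) : ℝ≥0∞ :=
  liminf (fun x => ENNReal.ofReal (Real.log (ψ x) / Real.log x))
    (nhdsWithin 0 (Ioi (0 : ℝ)))

/-- Lemma: in a proper `α`-Ahlfors regular space, a WDS pair `(Q,R)` is
well-distributed in every nonempty bounded open set `U`, with a constant `C_U`
depending on `U`. -/
theorem wds_open_sets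
    [MetricSpace X] [ProperSpace X] [MeasurableSpace X] [BorelSpace X]
    (μ : Measure X) (α C₀ : ℝ) (hα : 0 < α) (hC₀ : 0 < C₀)
    (hreg : IsAhlforsRegularWith μ α C₀)
    (Q : Set X) (hQ : Q.Countable) (R : X → ℝ) (hR : ∀ ξ ∈ Q, 0 < R ξ)
    (C : ℝ) (hWDS : IsWDS μ α Q R C) :
    ∀ U : Set X, IsOpen U → U.Nonempty → Bornology.IsBounded U →
      ∃ C_U : ℝ, 1 ≤ C_U ∧ ∃ k_U : ℕ, ∀ k : ℕ, k_U ≤ k → ∃ F : Finset X,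
        ↑F ⊆ Q ∧ (∀ ξ ∈ F, 1 / (C * k) ≤ R ξ ∧ R ξ ≤ C / k) ∧
        (∀ ξ ∈ F, ball ξ (R ξ) ⊆ U) ∧
        ENNReal.ofReal ((k : ℝ) ^ α / C_U) * μ U ≤ (F.card : ℝ≥0∞) := by
  obtain ⟨hC1, _hsep, hdist⟩ := hWDS
  intro U hUopen hUne hUbdd
  obtain ⟨η, hη⟩ := hUne
  obtain ⟨ε, hε, hball⟩ := Metric.isOpen_iff.mp hUopen η hη
  have hC : (0:ℝ) < C := lt_of_lt_of_le one_pos hC1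
  -- μ U is finite, via the WDS condition applied to a large ball containing U
  have hMfin : μ U < ⊤ := by
    obtain ⟨R₀, hR₀⟩ := hUbdd.subset_closedBall η
    set R₁ : ℝ := max R₀ 0 + 1 with hR₁def
    have hR₁pos : (0:ℝ) < R₁ := by positivity
    have hUsub : U ⊆ ball η R₁ := hR₀.trans (closedBall_subset_ball
      (by simp only [hR₁def]; nlinarith [le_max_left R₀ (0:ℝ)]))
    obtain ⟨kB, hkB⟩ := hdist η R₁ hR₁pos
    obtain ⟨F, -, -, -, hcard⟩ := hkB (max kB 1) (le_max_left _ _)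
    have hkpos : (0:ℝ) < ((max kB 1 : ℕ) : ℝ) := by
      have : 0 < max kB 1 := by omega
      exact_mod_cast this
    have hfac : (0:ℝ) < ((max kB 1 : ℕ) : ℝ) ^ α / C := by positivity
    have hfacpos : (0:ℝ≥0∞) < ENNReal.ofReal (((max kB 1 : ℕ) : ℝ) ^ α / C) :=
      ENNReal.ofReal_pos.mpr hfac
    have hblt : μ (ball η R₁) < ⊤ := by
      by_contra h
      push_neg at h
      have htop : μ (ball η R₁) = ⊤ := top_le_iff.mp h
      rw [htop, ENNReal.mul_top hfacpos.ne'] at hcard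
      exact absurd (top_le_iff.mp hcard) (ENNReal.natCast_lt_top F.card).ne
    exact lt_of_le_of_lt (measure_mono hUsub) hblt
  obtain ⟨kB, hkB⟩ := hdist η ε hε
  rcases eq_or_ne (μ U) 0 with hM0 | hMpos
  · -- trivial case: μ U = 0
    refine ⟨C, hC1, kB, fun k hk => ?_⟩
    obtain ⟨F, hFQ, hFR, hFb, hcard⟩ := hkB k hk
    exact ⟨F, hFQ, hFR, fun ξ hξ => (hFb ξ hξ).trans hball,
      by rw [hM0, mul_zero]; exact zero_le⟩
  · -- main case
    set m := μ (ball η ε) with hm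
    set M := μ U with hMdef
    have hmM : m ≤ M := measure_mono hball
    have hmfin : m < ⊤ := lt_of_le_of_lt hmM hMfin
    -- m > 0
    have hmpos : 0 < m := by
      rcases eq_or_ne (EMetric.diam (univ : Set X)) 0 with hd0 | hdne
      · -- subsingleton space: ball η ε = U
        have hsub : (univ : Set X).Subsingleton := EMetric.diam_eq_zero_iff.mp hd0
        have hUb : U ⊆ ball η ε := fun x hx => by
          have : x = η := hsub trivial trivial
          simp [this, hε]
        exact lt_of_lt_of_le (pos_iff_ne_zero.mpr hMpos) (measure_mono hUb)
      · -- pick a radius r ≤ ε with ofReal r ≤ diam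
        have hdpos : 0 < EMetric.diam (univ : Set X) := pos_iff_ne_zero.mpr hdne
        obtain ⟨r, hr0, hrε, hrd⟩ : ∃ r : ℝ, 0 < r ∧ r ≤ ε ∧
            ENNReal.ofReal r ≤ EMetric.diam (univ : Set X) := by
          rcases eq_or_ne (EMetric.diam (univ : Set X)) ⊤ with hT | hT
          · exact ⟨ε, hε, le_refl _, by simp [hT]⟩
          · have htr : 0 < (EMetric.diam (univ : Set X)).toReal :=
              ENNReal.toReal_pos hdne hT
            refine ⟨min ε (EMetric.diam (univ : Set X)).toReal, lt_min hε htr,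
              min_le_left _ _, ?_⟩
            calc ENNReal.ofReal (min ε (EMetric.diam (univ : Set X)).toReal)
                ≤ ENNReal.ofReal (EMetric.diam (univ : Set X)).toReal :=
                  ENNReal.ofReal_le_ofReal (min_le_right _ _)
              _ = EMetric.diam (univ : Set X) := ENNReal.ofReal_toReal hT
        have hlow := (hreg η r hr0 hrd).1
        have : (0:ℝ≥0∞) < ENNReal.ofReal (r ^ α / C₀) :=
          ENNReal.ofReal_pos.mpr (by positivity)
        calc (0:ℝ≥0∞) < ENNReal.ofReal (r ^ α / C₀) := this
          _ ≤ μ (ball η r) := hlow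
          _ ≤ m := measure_mono (ball_subset_ball hrε)
    have hmr : 0 < m.toReal := ENNReal.toReal_pos hmpos.ne' hmfin.ne
    have hMr : 0 < M.toReal := ENNReal.toReal_pos hMpos hMfin.ne
    have hmMr : m.toReal ≤ M.toReal := ENNReal.toReal_mono hMfin.ne hmM
    refine ⟨C * M.toReal / m.toReal, ?_, kB, fun k hk => ?_⟩
    · rw [le_div_iff₀ hmr]
      nlinarith
    · obtain ⟨F, hFQ, hFR, hFb, hcard⟩ := hkB k hk
      refine ⟨F, hFQ, hFR, fun ξ hξ => (hFb ξ hξ).trans hball, ?_⟩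
      refine le_trans ?_ hcard
      have hCU : (0:ℝ) < C * M.toReal / m.toReal := by positivity
      have key : (k:ℝ) ^ α / (C * M.toReal / m.toReal)
          = ((k:ℝ) ^ α / C) * (m.toReal / M.toReal) := by
        field_simp
      rw [key, ENNReal.ofReal_mul (by positivity),
        ENNReal.ofReal_div_of_pos hMr, ENNReal.ofReal_toReal hmfin.ne,
        ENNReal.ofReal_toReal hMfin.ne]
      rw [mul_assoc, ENNReal.div_mul_cancel hMpos hMfin.ne]
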